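/- Let G be a finite 2-group with [a₂,a₃] ∈ G₃ and exponent-2 lower central quotients (i.e. G_j/G_{j+1} elementary abelian 2-groups for all j). Then c₁₂₃ ≡ c₁₃₂ (mod G₄), where c_{ijk} = [[a_i,a_j],a_k]. -/

import Mathlib

open scoped commutatorElement

/-- Pure commutator-calculus key lemma: in a group where all the relevant
higher commutators vanish, `⁅⁅b₁,b₂⁆,b₃⁆ = ⁅⁅b₁,b₃⁆,b₂⁆`. -/
theorem key_comm_lemma {Q : Type*} [Group Q] (b₁ b₂ b₃ : Q)
    (hz : ∀ w : Q, ⁅(⁅b₂, b₃⁆ : Q), w⁆ = 1)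
    (hA : ∀ x y z w : Q, ⁅(⁅(⁅x, y⁆ : Q), z⁆ : Q), w⁆ = 1)
    (hC : ∀ x y z w : Q, ⁅(⁅x, y⁆ : Q), (⁅z, w⁆ : Q)⁆ = 1) :
    ⁅(⁅b₁, b₂⁆ : Q), b₃⁆ = ⁅(⁅b₁, b₃⁆ : Q), b₂⁆ := by
  set z := (⁅b₂, b₃⁆ : Q) with hzdef
  have hzc : ∀ w : Q, Commute z w := fun w =>
    (commutatorElement_eq_one_iff_commute.mp (hz w))
  -- z commutes with everything, so ⁅b₁, b₂*b₃⁆ = ⁅b₁, b₃*b₂⁆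
  have h1 : b₂ * b₃ = z * (b₃ * b₂) := by
    rw [hzdef]; group
  have h2 : ⁅b₁, b₂ * b₃⁆ = ⁅b₁, b₃ * b₂⁆ := by
    rw [h1, commutatorElement_def, commutatorElement_def, mul_inv_rev, mul_inv_rev]
    have e1 : b₁ * (z * (b₃ * b₂)) = z * (b₁ * (b₃ * b₂)) := by
      rw [← mul_assoc, ← (hzc b₁).eq, mul_assoc]
    calc b₁ * (z * (b₃ * b₂)) * b₁⁻¹ * (b₂⁻¹ * b₃⁻¹ * z⁻¹)
        = z * (b₁ * (b₃ * b₂) * b₁⁻¹ * (b₂⁻¹ * b₃⁻¹)) * z⁻¹ := by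
          rw [e1]; group
      _ = b₁ * (b₃ * b₂) * b₁⁻¹ * (b₂⁻¹ * b₃⁻¹) * z * z⁻¹ := by
          rw [(hzc _).eq]
      _ = b₁ * (b₃ * b₂) * b₁⁻¹ * (b₂⁻¹ * b₃⁻¹) := by group
  -- expansion of ⁅a, b*c⁆
  have hexp : ∀ a b c : Q, ⁅a, b * c⁆ = ⁅a, b⁆ * (b * ⁅a, c⁆ * b⁻¹) := by
    intro a b c; simp only [commutatorElement_def]; group
  have hconj : ∀ g x : Q, g * x * g⁻¹ = ⁅g, x⁆ * x := by
    intro g x; simp only [commutatorElement_def]; group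
  rw [hexp, hexp, hconj b₂ ⁅b₁, b₃⁆, hconj b₃ ⁅b₁, b₂⁆] at h2
  -- now h2 : ⁅b₁,b₂⁆ * (⁅b₂,⁅b₁,b₃⁆⁆ * ⁅b₁,b₃⁆) = ⁅b₁,b₃⁆ * (⁅b₃,⁅b₁,b₂⁆⁆ * ⁅b₁,b₂⁆)
  have hT2 : (⁅b₂, (⁅b₁, b₃⁆ : Q)⁆ : Q) = (⁅(⁅b₁, b₃⁆ : Q), b₂⁆)⁻¹ := by
    rw [commutatorElement_inv]
  have hT3 : (⁅b₃, (⁅b₁, b₂⁆ : Q)⁆ : Q) = (⁅(⁅b₁, b₂⁆ : Q), b₃⁆)⁻¹ := by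
    rw [commutatorElement_inv]
  rw [hT2, hT3] at h2
  have hT2c : ∀ w : Q, Commute (⁅(⁅b₁, b₃⁆ : Q), b₂⁆ : Q) w := fun w =>
    commutatorElement_eq_one_iff_commute.mp (hA b₁ b₃ b₂ w)
  have hT3c : ∀ w : Q, Commute (⁅(⁅b₁, b₂⁆ : Q), b₃⁆ : Q) w := fun w =>
    commutatorElement_eq_one_iff_commute.mp (hA b₁ b₂ b₃ w)
  have hCC : Commute (⁅b₁, b₂⁆ : Q) (⁅b₁, b₃⁆ : Q) :=
    commutatorElement_eq_one_iff_commute.mp (hC b₁ b₂ b₁ b₃)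
  -- rearrange h2 using centrality
  have l : ⁅b₁, b₂⁆ * ((⁅(⁅b₁, b₃⁆:Q), b₂⁆)⁻¹ * ⁅b₁, b₃⁆)
      = (⁅(⁅b₁, b₃⁆:Q), b₂⁆)⁻¹ * (⁅b₁, b₂⁆ * ⁅b₁, b₃⁆) := by
    rw [← mul_assoc, ((hT2c _).inv_left.eq).symm, mul_assoc]
  have r : ⁅b₁, b₃⁆ * ((⁅(⁅b₁, b₂⁆:Q), b₃⁆)⁻¹ * ⁅b₁, b₂⁆)
      = (⁅(⁅b₁, b₂⁆:Q), b₃⁆)⁻¹ * (⁅b₁, b₂⁆ * ⁅b₁, b₃⁆) := by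
    rw [← mul_assoc, ((hT3c _).inv_left.eq).symm, mul_assoc, hCC.eq]
  rw [l, r] at h2
  have := mul_right_cancel h2
  exact inv_injective this |>.symm


/-- Let `G` be a finite 2-group generated by `a₁, a₂, a₃` with `[a₂,a₃] ∈ G₃`,
elementary abelian lower central quotients (`x² ∈ G_{j+1}` for `x ∈ G_j`), and
`G'' ⊆ G₄`. Then `c₁₂₃ ≡ c₁₃₂ (mod G₄)`. -/
theorem c123_eq_c132_mod_G4 {G : Type*} [Group G] [Finite G] (hp : IsPGroup 2 G)
    (a₁ a₂ a₃ : G) (hgen : Subgroup.closure {a₁, a₂, a₃} = (⊤ : Subgroup G))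
    (h23 : ⁅a₂, a₃⁆ ∈ (⊤ : Subgroup G).lowerCentralSeries 2)
    (hexp : ∀ j : ℕ, ∀ x ∈ (⊤ : Subgroup G).lowerCentralSeries j, x ^ 2 ∈ (⊤ : Subgroup G).lowerCentralSeries (j + 1))
    (hG'' : ⁅commutator G, commutator G⁆ ≤ (⊤ : Subgroup G).lowerCentralSeries 3) :
    ⁅⁅a₁, a₂⁆, a₃⁆ * (⁅⁅a₁, a₃⁆, a₂⁆)⁻¹ ∈ (⊤ : Subgroup G).lowerCentralSeries 3 := by
  set N := (⊤ : Subgroup G).lowerCentralSeries 3 with hN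
  haveI : N.Normal := inferInstance
  set π : G →* G ⧸ N := QuotientGroup.mk' N with hπ
  have hsurj : Function.Surjective π := QuotientGroup.mk'_surjective N
  have hker : ∀ g : G, π g = 1 ↔ g ∈ N := fun g => QuotientGroup.eq_one_iff g
  -- membership facts in G
  have mem1 : ∀ x y : G, ⁅x, y⁆ ∈ (⊤ : Subgroup G).lowerCentralSeries 1 := by
    intro x y
    rw [Subgroup.top_lowerCentralSeries_one]
    exact Subgroup.commutator_mem_commutator (Subgroup.mem_top x) (Subgroup.mem_top y)
  have memsucc : ∀ n : ℕ, ∀ x ∈ (⊤ : Subgroup G).lowerCentralSeries n, ∀ y : G,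
      ⁅x, y⁆ ∈ (⊤ : Subgroup G).lowerCentralSeries (n + 1) := by
    intro n x hx y
    rw [Subgroup.lowerCentralSeries_succ]
    exact Subgroup.commutator_mem_commutator hx (Subgroup.mem_top y)
  -- the three hypotheses of the key lemma, in the quotient
  have hz : ∀ w : G ⧸ N, ⁅(⁅π a₂, π a₃⁆ : G ⧸ N), w⁆ = 1 := by
    intro w
    obtain ⟨w, rfl⟩ := hsurj w
    rw [← map_commutatorElement, ← map_commutatorElement]
    rw [hker]
    exact memsucc 2 _ h23 w
  have hA : ∀ x y z w : G ⧸ N, ⁅(⁅(⁅x, y⁆ : G ⧸ N), z⁆ : G ⧸ N), w⁆ = 1 := by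
    intro x y z w
    obtain ⟨x, rfl⟩ := hsurj x; obtain ⟨y, rfl⟩ := hsurj y
    obtain ⟨z, rfl⟩ := hsurj z; obtain ⟨w, rfl⟩ := hsurj w
    rw [← map_commutatorElement, ← map_commutatorElement, ← map_commutatorElement, hker]
    exact memsucc 2 _ (memsucc 1 _ (mem1 x y) z) w
  have hC : ∀ x y z w : G ⧸ N, ⁅(⁅x, y⁆ : G ⧸ N), (⁅z, w⁆ : G ⧸ N)⁆ = 1 := by
    intro x y z w
    obtain ⟨x, rfl⟩ := hsurj x; obtain ⟨y, rfl⟩ := hsurj y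
    obtain ⟨z, rfl⟩ := hsurj z; obtain ⟨w, rfl⟩ := hsurj w
    rw [← map_commutatorElement, ← map_commutatorElement, ← map_commutatorElement, hker]
    refine hG'' ?_
    exact Subgroup.commutator_mem_commutator
      (Subgroup.commutator_mem_commutator (Subgroup.mem_top x) (Subgroup.mem_top y))
      (Subgroup.commutator_mem_commutator (Subgroup.mem_top z) (Subgroup.mem_top w))
  have key := key_comm_lemma (π a₁) (π a₂) (π a₃) hz hA hC
  rw [← hker]
  rw [map_mul, map_inv, map_commutatorElement, map_commutatorElement,
    map_commutatorElement, map_commutatorElement, key, mul_inv_cancel]
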